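/- For all s ∈ (0,1], n ∈ ℤ, η ∈ ℝ and p ∈ (0,1), the regularized Volterra kernel on the diagonal satisfies K̃_n(η; p, p) = π p √(1 − p) / 2. In particular it is nonzero for every p ∈ (0,1), uniformly in n and η. -/

import Mathlib

open Real MeasureTheory intervalIntegral

/-- The Volterra kernel `K_n(η; p, u)`. -/
noncomputable def Kkernel (s : ℝ) (n : ℤ) (η p u : ℝ) : ℝ :=
  ∫ t in u..p,
    (t * Real.sqrt (t ^ 2 + s ^ 2 * (p ^ 2 - t ^ 2)) *
        Real.cos ((η / s) * Real.sqrt (p ^ 2 - t ^ 2)) *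
        (Polynomial.Chebyshev.T ℝ |n|).eval
          (((1 - u) ^ 2 + 1 - t ^ 2) / (2 * (1 - u)))) /
      (Real.sqrt (p ^ 2 - t ^ 2) *
        Real.sqrt (1 - (((1 - u) ^ 2 + 1 - t ^ 2) / (2 * (1 - u))) ^ 2))

/-- The regularized Volterra kernel `K̃_n(η; p, u)`, obtained from `K_n` by the change of
variables `t = u + v (p - u)`. -/
noncomputable def KkernelReg (s : ℝ) (n : ℤ) (η p u : ℝ) : ℝ :=
  Real.sqrt (1 - u) *
    ∫ v in (0 : ℝ)..1,
      (fun w =>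
        (w * Real.sqrt (w ^ 2 + s ^ 2 * (p ^ 2 - w ^ 2)) *
            Real.cos ((η / s) * Real.sqrt (p ^ 2 - w ^ 2)) *
            (Polynomial.Chebyshev.T ℝ |n|).eval
              (((1 - u) ^ 2 + 1 - w ^ 2) / (2 * (1 - u)))) /
          (Real.sqrt v * Real.sqrt (1 - v) * Real.sqrt (p + w) * Real.sqrt (w + u) *
            Real.sqrt (1 + (u ^ 2 - w ^ 2) / (4 * (1 - u)))))
        (u + v * (p - u))


lemma beta_integrable : IntervalIntegrable (fun v : ℝ => (Real.sqrt v * Real.sqrt (1 - v))⁻¹)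
    volume 0 1 := by
  have h1 : IntervalIntegrable (fun v : ℝ => Real.sqrt 2 * v ^ (-(1/2) : ℝ)) volume 0 1 :=
    (intervalIntegral.intervalIntegrable_rpow' (by norm_num)).const_mul _
  have h2 : IntervalIntegrable (fun v : ℝ => Real.sqrt 2 * (1 - v) ^ (-(1/2) : ℝ)) volume 0 1 := by
    have := (((intervalIntegral.intervalIntegrable_rpow' (r := -(1/2)) (by norm_num)
      (a := 0) (b := 1)).const_mul (Real.sqrt 2)).comp_sub_left 1).symm
    simpa using this
  refine ((h1.add h2).mono_fun ?_ ?_)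
  · apply Measurable.aestronglyMeasurable
    exact ((Real.continuous_sqrt.measurable).mul
      (Real.continuous_sqrt.measurable.comp (measurable_const.sub measurable_id))).inv
  · filter_upwards [MeasureTheory.ae_restrict_mem measurableSet_Ioc] with v hv
    rw [Set.uIoc_of_le (by norm_num : (0:ℝ) ≤ 1)] at hv
    obtain ⟨hv0, hv1⟩ := hv
    have hb0 : (0:ℝ) ≤ Real.sqrt 2 * v ^ (-(1/2) : ℝ) := by positivity
    have hb1 : (0:ℝ) ≤ Real.sqrt 2 * (1 - v) ^ (-(1/2) : ℝ) :=
      mul_nonneg (Real.sqrt_nonneg 2) (Real.rpow_nonneg (by linarith) _)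
    have hrv : v ^ (-(1/2) : ℝ) = (Real.sqrt v)⁻¹ := by
      rw [Real.rpow_neg hv0.le, Real.sqrt_eq_rpow]
    have hrw : (1 - v) ^ (-(1/2) : ℝ) = (Real.sqrt (1 - v))⁻¹ := by
      rw [Real.rpow_neg (by linarith), Real.sqrt_eq_rpow]
    rw [Real.norm_eq_abs, Real.norm_eq_abs, abs_of_nonneg (by positivity),
      abs_of_nonneg (by positivity), hrv, hrw, mul_inv]
    rcases le_or_gt v (1/2) with hc | hc
    · have h12 : (Real.sqrt 2)⁻¹ ≤ Real.sqrt (1 - v) := by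
        rw [← Real.sqrt_inv]
        exact Real.sqrt_le_sqrt (by linarith)
      have : (Real.sqrt (1 - v))⁻¹ ≤ Real.sqrt 2 := by
        rw [← inv_inv (Real.sqrt 2)]
        exact inv_anti₀ (by positivity) h12
      have h3 : (Real.sqrt v)⁻¹ * (Real.sqrt (1 - v))⁻¹ ≤ Real.sqrt 2 * (Real.sqrt v)⁻¹ := by
        rw [mul_comm]
        exact mul_le_mul_of_nonneg_right this (by positivity)
      have : (0:ℝ) ≤ Real.sqrt 2 * (Real.sqrt (1 - v))⁻¹ := by positivity
      linarith
    · have h12 : (Real.sqrt 2)⁻¹ ≤ Real.sqrt v := by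
        rw [← Real.sqrt_inv]
        exact Real.sqrt_le_sqrt (by linarith)
      have : (Real.sqrt v)⁻¹ ≤ Real.sqrt 2 := by
        rw [← inv_inv (Real.sqrt 2)]
        exact inv_anti₀ (by positivity) h12
      have h3 : (Real.sqrt v)⁻¹ * (Real.sqrt (1 - v))⁻¹ ≤ Real.sqrt 2 * (Real.sqrt (1 - v))⁻¹ :=
        mul_le_mul_of_nonneg_right this (by positivity)
      have : (0:ℝ) ≤ Real.sqrt 2 * (Real.sqrt v)⁻¹ := by positivity
      linarith

lemma beta_integral : ∫ v in (0:ℝ)..1, (Real.sqrt v * Real.sqrt (1 - v))⁻¹ = π := by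
  have h := intervalIntegral.integral_eq_sub_of_hasDeriv_right_of_le (a := (0:ℝ)) (b := 1)
    (f := fun v => Real.arcsin (2 * v - 1))
    (f' := fun v => (Real.sqrt v * Real.sqrt (1 - v))⁻¹)
    (by norm_num)
    ((Real.continuous_arcsin.comp (by continuity)).continuousOn)
    (fun v hv => ?_) beta_integrable
  · rw [h]
    norm_num [Real.arcsin_one, Real.arcsin_neg_one]
  · obtain ⟨hv0, hv1⟩ := hv
    have h1 : HasDerivAt (fun v : ℝ => 2 * v - 1) 2 v := by
      simpa using ((hasDerivAt_id v).const_mul 2).sub_const 1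
    have h2 : HasDerivAt Real.arcsin (1 / Real.sqrt (1 - (2 * v - 1) ^ 2)) (2 * v - 1) :=
      Real.hasDerivAt_arcsin (by intro h; nlinarith) (by intro h; nlinarith)
    have h3 := h2.comp v h1
    rw [Function.comp_def] at h3
    have hsq : Real.sqrt (1 - (2 * v - 1) ^ 2) = 2 * (Real.sqrt v * Real.sqrt (1 - v)) := by
      have : 1 - (2 * v - 1) ^ 2 = 2 ^ 2 * (v * (1 - v)) := by ring
      rw [this, Real.sqrt_mul (by positivity), Real.sqrt_sq (by norm_num : (0:ℝ) ≤ 2),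
        Real.sqrt_mul hv0.le]
    have hpos : (0:ℝ) < Real.sqrt v * Real.sqrt (1 - v) := by
      apply mul_pos (Real.sqrt_pos.2 hv0) (Real.sqrt_pos.2 (by linarith))
    have heq : 1 / Real.sqrt (1 - (2 * v - 1) ^ 2) * 2 = (Real.sqrt v * Real.sqrt (1 - v))⁻¹ := by
      rw [hsq]; field_simp
    rw [heq] at h3
    exact h3.hasDerivWithinAt

/-- On the diagonal, the regularized Volterra kernel equals `π p √(1-p) / 2`; in
particular it is nonzero for `p ∈ (0,1)`, uniformly in `n` and `η`. -/
theorem stmt14 (s : ℝ) (hs : s ∈ Set.Ioc (0 : ℝ) 1) (n : ℤ) (η p : ℝ)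
    (hp : p ∈ Set.Ioo (0 : ℝ) 1) :
    KkernelReg s n η p p = π * p * Real.sqrt (1 - p) / 2 ∧
      KkernelReg s n η p p ≠ 0 := by
  obtain ⟨hp0, hp1⟩ := hp
  have hmain : KkernelReg s n η p p = π * p * Real.sqrt (1 - p) / 2 := by
    unfold KkernelReg
    have hT : (Polynomial.Chebyshev.T ℝ |n|).eval 1 = 1 := by
      have := Polynomial.Chebyshev.T_real_cos (θ := 0) (n := |n|)
      simpa using this
    have hfun : ∀ v : ℝ,
        (fun w =>
          (w * Real.sqrt (w ^ 2 + s ^ 2 * (p ^ 2 - w ^ 2)) *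
              Real.cos ((η / s) * Real.sqrt (p ^ 2 - w ^ 2)) *
              (Polynomial.Chebyshev.T ℝ |n|).eval
                (((1 - p) ^ 2 + 1 - w ^ 2) / (2 * (1 - p)))) /
            (Real.sqrt v * Real.sqrt (1 - v) * Real.sqrt (p + w) * Real.sqrt (w + p) *
              Real.sqrt (1 + (p ^ 2 - w ^ 2) / (4 * (1 - p)))))
          (p + v * (p - p)) = p / 2 * (Real.sqrt v * Real.sqrt (1 - v))⁻¹ := by
      intro v
      have hw : p + v * (p - p) = p := by ring
      rw [hw]
      beta_reduce
      have e1 : p ^ 2 + s ^ 2 * (p ^ 2 - p ^ 2) = p ^ 2 := by ring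
      have e2 : p ^ 2 - p ^ 2 = 0 := by ring
      have e3 : ((1 - p) ^ 2 + 1 - p ^ 2) / (2 * (1 - p)) = 1 := by
        rw [div_eq_one_iff_eq (by nlinarith)]
        ring
      have e4 : (p ^ 2 - p ^ 2) / (4 * (1 - p)) = 0 := by rw [e2]; simp
      rw [e1, e2, e3, hT, Real.sqrt_sq hp0.le, Real.sqrt_zero, mul_zero, Real.cos_zero,
        zero_div, add_zero, Real.sqrt_one]
      have e5 : Real.sqrt (p + p) * Real.sqrt (p + p) = p + p :=
        Real.mul_self_sqrt (by linarith)
      rcases eq_or_ne (Real.sqrt v * Real.sqrt (1 - v)) 0 with h0 | h0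
      · rcases mul_eq_zero.1 h0 with h | h <;> simp [h, h0]
      · have hv : Real.sqrt v ≠ 0 := fun h => h0 (by simp [h])
        have hv' : Real.sqrt (1 - v) ≠ 0 := fun h => h0 (by simp [h])
        have hpp : Real.sqrt (p + p) ≠ 0 := by
          simp [Real.sqrt_eq_zero' ]; linarith
        field_simp
        rw [Real.sq_sqrt (by linarith)]
        ring
    rw [intervalIntegral.integral_congr (g := fun v => p / 2 * (Real.sqrt v * Real.sqrt (1 - v))⁻¹)
      (fun v _ => hfun v)]
    rw [intervalIntegral.integral_const_mul, beta_integral]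
    ring
  refine ⟨hmain, ?_⟩
  rw [hmain]
  have : 0 < π * p * Real.sqrt (1 - p) / 2 := by
    have := Real.pi_pos
    have h2 : 0 < Real.sqrt (1 - p) := Real.sqrt_pos.2 (by linarith)
    positivity
  exact ne_of_gt this
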